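/- Define η_n^{i,1} := 0 for n ≤ 1 and, for n ≥ 2 and i ∈ {0,1}, η_n^{i,1} := (1/H)(n log n − E[I_n^i log I_n^i + (n − I_n^i) log(n − I_n^i)]) + π_{1−i} ((H_{1−i} − H_i)/H) n + ((H_1 − H_0)/((p_{01}+p_{10})H)) p_{i0} p_{i1}^{n−1} n, where I_n^i is binomial B(n, p_{i0}) distributed and 0 log 0 := 0, and set η_n^{i,2} := n − η_n^{i,1} for n ≥ 2 (and η_n^{i,2} := 0 for n ≤ 1). Then η_n^{i,2} = O(log n) as n → ∞, for both i ∈ {0,1}. -/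

import Mathlib

open Filter Asymptotics Real

/-- Expectation of `a` under the binomial distribution `B(n, p)`. -/
noncomputable def binomExp (p : ℝ) (n : ℕ) (a : ℕ → ℝ) : ℝ :=
  ∑ k ∈ Finset.range (n + 1), (n.choose k : ℝ) * p ^ k * (1 - p) ^ (n - k) * a k

set_option maxHeartbeats 1000000

lemma le_mul_log {x μ : ℝ} (hx : 0 ≤ x) (hμ : 0 < μ) :
    x * Real.log μ + (x - μ) ≤ x * Real.log x := by
  rcases hx.eq_or_lt with h | h
  · simp [← h]; linarith
  · have h1 : Real.log (μ / x) ≤ μ / x - 1 := Real.log_le_sub_one_of_pos (div_pos hμ h)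
    have h2 : Real.log (μ / x) = Real.log μ - Real.log x := Real.log_div hμ.ne' h.ne'
    have h3 : x * Real.log (μ / x) ≤ x * (μ / x - 1) :=
      mul_le_mul_of_nonneg_left h1 hx
    have h4 : x * (μ / x - 1) = μ - x := by field_simp
    rw [h2] at h3; nlinarith

lemma mul_log_le {x μ : ℝ} (hx : 0 ≤ x) (hμ : 0 < μ) :
    x * Real.log x ≤ x * Real.log μ + x * (x - μ) / μ := by
  rcases hx.eq_or_lt with h | h
  · simp [← h]
  · have h1 : Real.log (x / μ) ≤ x / μ - 1 := Real.log_le_sub_one_of_pos (div_pos h hμ)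
    have h2 : Real.log (x / μ) = Real.log x - Real.log μ := Real.log_div h.ne' hμ.ne'
    have h3 : x * Real.log (x / μ) ≤ x * (x / μ - 1) := mul_le_mul_of_nonneg_left h1 hx
    rw [h2] at h3
    have h4 : x * (x / μ - 1) = x * (x - μ) / μ := by field_simp
    linarith [h4 ▸ h3]

lemma bern_eval (p : ℝ) (n ν : ℕ) :
    (bernsteinPolynomial ℝ n ν).eval p = (n.choose ν : ℝ) * p ^ ν * (1 - p) ^ (n - ν) := by
  simp [bernsteinPolynomial]

lemma moment0 (p : ℝ) (n : ℕ) :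
    ∑ k ∈ Finset.range (n + 1), (n.choose k : ℝ) * p ^ k * (1 - p) ^ (n - k) = 1 := by
  have h := congrArg (Polynomial.eval p) (bernsteinPolynomial.sum ℝ n)
  simpa [Polynomial.eval_finset_sum, bern_eval] using h

lemma moment1 (p : ℝ) (n : ℕ) :
    ∑ k ∈ Finset.range (n + 1), (n.choose k : ℝ) * p ^ k * (1 - p) ^ (n - k) * k
      = n * p := by
  have h := congrArg (Polynomial.eval p) (bernsteinPolynomial.sum_smul ℝ n)
  simp [Polynomial.eval_finset_sum, bern_eval] at h
  rw [← h]
  exact Finset.sum_congr rfl fun k _ => by push_cast; ring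

lemma moment2 (p : ℝ) (n : ℕ) :
    ∑ k ∈ Finset.range (n + 1), (n.choose k : ℝ) * p ^ k * (1 - p) ^ (n - k) * ((k : ℝ) ^ 2 - k)
      = (n : ℝ) * ((n : ℝ) - 1) * p ^ 2 := by
  have h := congrArg (Polynomial.eval p) (bernsteinPolynomial.sum_mul_smul ℝ n)
  simp [Polynomial.eval_finset_sum, bern_eval] at h
  have hL : ∑ k ∈ Finset.range (n + 1),
      (n.choose k : ℝ) * p ^ k * (1 - p) ^ (n - k) * ((k : ℝ) ^ 2 - k)
      = ∑ x ∈ Finset.range (n + 1), (x : ℝ) * ((x - 1 : ℕ) : ℝ) * ((n.choose x : ℝ) * p ^ x * (1 - p) ^ (n - x)) := by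
    refine Finset.sum_congr rfl fun k _ => ?_
    cases k with
    | zero => simp
    | succ m => push_cast [Nat.succ_sub_one]; ring
  rw [hL, h]
  cases n with
  | zero => simp
  | succ m => push_cast [Nat.succ_sub_one]; ring

lemma sum_quad (p : ℝ) (n : ℕ) (A B C : ℝ) :
    ∑ k ∈ Finset.range (n + 1),
        (n.choose k : ℝ) * p ^ k * (1 - p) ^ (n - k) * (A + B * k + C * (k : ℝ) ^ 2)
      = A + B * ((n : ℝ) * p) + C * ((n : ℝ) * ((n : ℝ) - 1) * p ^ 2 + (n : ℝ) * p) := by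
  have h : ∀ k ∈ Finset.range (n + 1),
      (n.choose k : ℝ) * p ^ k * (1 - p) ^ (n - k) * (A + B * k + C * (k : ℝ) ^ 2)
      = A * ((n.choose k : ℝ) * p ^ k * (1 - p) ^ (n - k))
        + (B + C) * ((n.choose k : ℝ) * p ^ k * (1 - p) ^ (n - k) * k)
        + C * ((n.choose k : ℝ) * p ^ k * (1 - p) ^ (n - k) * ((k : ℝ) ^ 2 - k)) :=
    fun k _ => by ring
  rw [Finset.sum_congr rfl h, Finset.sum_add_distrib, Finset.sum_add_distrib,
    ← Finset.mul_sum, ← Finset.mul_sum, ← Finset.mul_sum, moment0, moment1, moment2]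
  ring

lemma central (p : ℝ) (hp0 : 0 < p) (hp1 : p < 1) (n : ℕ) (hn : 1 ≤ n) :
    (n : ℝ) * Real.log n + (n : ℝ) * (p * Real.log p + (1 - p) * Real.log (1 - p))
      ≤ binomExp p n (fun k => (k : ℝ) * Real.log k + ((n - k : ℕ) : ℝ) * Real.log ((n - k : ℕ) : ℝ))
    ∧ binomExp p n (fun k => (k : ℝ) * Real.log k + ((n - k : ℕ) : ℝ) * Real.log ((n - k : ℕ) : ℝ))
      ≤ (n : ℝ) * Real.log n + (n : ℝ) * (p * Real.log p + (1 - p) * Real.log (1 - p)) + 1 := by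
  have hq0 : 0 < 1 - p := by linarith
  have hn0 : 0 < (n : ℝ) := by exact_mod_cast Nat.lt_of_lt_of_le Nat.zero_lt_one hn
  have hμ : 0 < (n : ℝ) * p := mul_pos hn0 hp0
  have hν : 0 < (n : ℝ) * (1 - p) := mul_pos hn0 hq0
  have hlogμ : Real.log ((n : ℝ) * p) = Real.log n + Real.log p := Real.log_mul hn0.ne' hp0.ne'
  have hlogν : Real.log ((n : ℝ) * (1 - p)) = Real.log n + Real.log (1 - p) :=
    Real.log_mul hn0.ne' hq0.ne'
  have hcast : binomExp p n
      (fun k => (k : ℝ) * Real.log k + ((n - k : ℕ) : ℝ) * Real.log ((n - k : ℕ) : ℝ))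
      = ∑ k ∈ Finset.range (n + 1), (n.choose k : ℝ) * p ^ k * (1 - p) ^ (n - k) *
          ((k : ℝ) * Real.log k + ((n : ℝ) - k) * Real.log ((n : ℝ) - k)) := by
    refine Finset.sum_congr rfl fun k hk => ?_
    have hk' : k ≤ n := Nat.lt_succ_iff.mp (Finset.mem_range.mp hk)
    simp only [Nat.cast_sub hk']
  constructor
  · rw [hcast]
    have h1 : ∑ k ∈ Finset.range (n + 1), (n.choose k : ℝ) * p ^ k * (1 - p) ^ (n - k) *
        ((-((n : ℝ) * p) + (n : ℝ) * Real.log ((n : ℝ) * (1 - p)) + (n : ℝ) - (n : ℝ) * (1 - p))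
          + (Real.log ((n : ℝ) * p) - Real.log ((n : ℝ) * (1 - p))) * k + 0 * (k : ℝ) ^ 2)
        ≤ ∑ k ∈ Finset.range (n + 1), (n.choose k : ℝ) * p ^ k * (1 - p) ^ (n - k) *
          ((k : ℝ) * Real.log k + ((n : ℝ) - k) * Real.log ((n : ℝ) - k)) := by
      refine Finset.sum_le_sum fun k hk => ?_
      have hk' : k ≤ n := Nat.lt_succ_iff.mp (Finset.mem_range.mp hk)
      have hkn : (k : ℝ) ≤ n := by exact_mod_cast hk'
      refine mul_le_mul_of_nonneg_left ?_ (by positivity)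
      have b1 := le_mul_log (x := (k : ℝ)) (μ := (n : ℝ) * p) (Nat.cast_nonneg k) hμ
      have b2 := le_mul_log (x := (n : ℝ) - k) (μ := (n : ℝ) * (1 - p)) (by linarith) hν
      nlinarith [b1, b2]
    rw [sum_quad] at h1
    rw [hlogμ, hlogν] at h1
    calc (n : ℝ) * Real.log n + (n : ℝ) * (p * Real.log p + (1 - p) * Real.log (1 - p))
        = (-((n : ℝ) * p) + (n : ℝ) * (Real.log n + Real.log (1 - p)) + (n : ℝ) - (n : ℝ) * (1 - p))
          + ((Real.log n + Real.log p) - (Real.log n + Real.log (1 - p))) * ((n : ℝ) * p)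
          + 0 * ((n : ℝ) * ((n : ℝ) - 1) * p ^ 2 + (n : ℝ) * p) := by ring
      _ ≤ _ := h1
  · rw [hcast]
    have h1 : ∑ k ∈ Finset.range (n + 1), (n.choose k : ℝ) * p ^ k * (1 - p) ^ (n - k) *
        ((k : ℝ) * Real.log k + ((n : ℝ) - k) * Real.log ((n : ℝ) - k))
        ≤ ∑ k ∈ Finset.range (n + 1), (n.choose k : ℝ) * p ^ k * (1 - p) ^ (n - k) *
          (((n : ℝ) * Real.log ((n : ℝ) * (1 - p)) + (n : ℝ) ^ 2 / ((n : ℝ) * (1 - p)) - (n : ℝ))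
            + (Real.log ((n : ℝ) * p) - Real.log ((n : ℝ) * (1 - p))
                - 2 * (n : ℝ) / ((n : ℝ) * (1 - p))) * k
            + (1 / ((n : ℝ) * p) + 1 / ((n : ℝ) * (1 - p))) * (k : ℝ) ^ 2) := by
      refine Finset.sum_le_sum fun k hk => ?_
      have hk' : k ≤ n := Nat.lt_succ_iff.mp (Finset.mem_range.mp hk)
      have hkn : (k : ℝ) ≤ n := by exact_mod_cast hk'
      refine mul_le_mul_of_nonneg_left ?_ (by positivity)
      have b1 := mul_log_le (x := (k : ℝ)) (μ := (n : ℝ) * p) (Nat.cast_nonneg k) hμ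
      have b2 := mul_log_le (x := (n : ℝ) - k) (μ := (n : ℝ) * (1 - p)) (by linarith) hν
      have key : ((k : ℝ) * Real.log ((n : ℝ) * p) + (k : ℝ) * ((k : ℝ) - (n : ℝ) * p) / ((n : ℝ) * p))
          + (((n : ℝ) - k) * Real.log ((n : ℝ) * (1 - p))
            + ((n : ℝ) - k) * (((n : ℝ) - k) - (n : ℝ) * (1 - p)) / ((n : ℝ) * (1 - p)))
          = ((n : ℝ) * Real.log ((n : ℝ) * (1 - p)) + (n : ℝ) ^ 2 / ((n : ℝ) * (1 - p)) - (n : ℝ))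
            + (Real.log ((n : ℝ) * p) - Real.log ((n : ℝ) * (1 - p))
                - 2 * (n : ℝ) / ((n : ℝ) * (1 - p))) * k
            + (1 / ((n : ℝ) * p) + 1 / ((n : ℝ) * (1 - p))) * (k : ℝ) ^ 2 := by
        field_simp
        ring
      linarith [key ▸ add_le_add b1 b2]
    rw [sum_quad, hlogμ, hlogν] at h1
    refine h1.trans (le_of_eq ?_)
    field_simp
    ring

theorem stmt10 (p : Fin 2 → Fin 2 → ℝ)
    (hp : ∀ i j, p i j ∈ Set.Ioo (0 : ℝ) 1)
    (hsum : ∀ i, p i 0 + p i 1 = 1)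
    (pi' H' : Fin 2 → ℝ) (H : ℝ)
    (hpi0 : pi' 0 = p 1 0 / (p 0 1 + p 1 0))
    (hpi1 : pi' 1 = p 0 1 / (p 0 1 + p 1 0))
    (hH' : ∀ i, H' i = -(p i 0 * Real.log (p i 0)) - p i 1 * Real.log (p i 1))
    (hH : H = pi' 0 * H' 0 + pi' 1 * H' 1) (hHpos : 0 < H)
    (η η₂ : Fin 2 → ℕ → ℝ)
    (hη0 : ∀ i : Fin 2, ∀ n : ℕ, n ≤ 1 → η i n = 0)
    (hη : ∀ i : Fin 2, ∀ n : ℕ, 2 ≤ n →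
      η i n = 1 / H * ((n : ℝ) * Real.log n
          - binomExp (p i 0) n
              (fun k => (k : ℝ) * Real.log k + ((n - k : ℕ) : ℝ) * Real.log ((n - k : ℕ) : ℝ)))
        + pi' (1 - i) * ((H' (1 - i) - H' i) / H) * n
        + (H' 1 - H' 0) / ((p 0 1 + p 1 0) * H) * p i 0 * p i 1 ^ (n - 1) * n)
    (hη₂0 : ∀ i : Fin 2, ∀ n : ℕ, n ≤ 1 → η₂ i n = 0)
    (hη₂ : ∀ i : Fin 2, ∀ n : ℕ, 2 ≤ n → η₂ i n = n - η i n) :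
    ∀ i : Fin 2, (fun n : ℕ => η₂ i n) =O[atTop] (fun n : ℕ => Real.log n) := by
  intro i
  have hp00 : 0 < p i 0 := (hp i 0).1
  have hp01 : p i 0 < 1 := (hp i 0).2
  have hp10 : 0 < p i 1 := (hp i 1).1
  have hp11 : p i 1 < 1 := (hp i 1).2
  have hq : p i 1 = 1 - p i 0 := by linarith [hsum i]
  have hpisum : pi' 0 + pi' 1 = 1 := by
    have h1 : 0 < p 0 1 := (hp 0 1).1
    have h2 : 0 < p 1 0 := (hp 1 0).1
    rw [hpi0, hpi1]
    field_simp
    ring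
  have hkey : H' i + pi' (1 - i) * (H' (1 - i) - H' i) = H := by
    fin_cases i
    · show H' 0 + pi' (1 - 0) * (H' (1 - 0) - H' 0) = H
      norm_num
      linear_combination -hH - H' 0 * hpisum
    · show H' 1 + pi' (1 - 1) * (H' (1 - 1) - H' 1) = H
      norm_num
      linear_combination -hH - H' 1 * hpisum
  set C' : ℝ := (H' 1 - H' 0) / ((p 0 1 + p 1 0) * H) * p i 0 with hC'
  -- eventual bound on the geometric term
  have hgeo : ∀ᶠ n : ℕ in atTop, (n : ℝ) * p i 1 ^ (n - 1) ≤ 1 := by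
    have ht := tendsto_pow_const_mul_const_pow_of_lt_one 1 hp10.le hp11
    filter_upwards [ht.eventually (gt_mem_nhds hp10), eventually_ge_atTop 1] with n h1 hn1
    have hpow : (n : ℝ) * p i 1 ^ (n - 1) * p i 1 = (n : ℝ) * p i 1 ^ n := by
      rw [mul_assoc, ← pow_succ]
      congr 2
      omega
    simp only [pow_one] at h1
    have : (n : ℝ) * p i 1 ^ (n - 1) * p i 1 < 1 * p i 1 := by rw [hpow, one_mul]; exact h1
    exact le_of_lt (lt_of_mul_lt_mul_right this hp10.le)
  have hlog : ∀ᶠ n : ℕ in atTop, 1 ≤ Real.log n := by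
    have : Tendsto (fun n : ℕ => Real.log n) atTop atTop :=
      Real.tendsto_log_atTop.comp tendsto_natCast_atTop_atTop
    exact this.eventually_ge_atTop 1
  rw [isBigO_iff]
  refine ⟨1 / H + |C'|, ?_⟩
  filter_upwards [hgeo, hlog, eventually_ge_atTop 2] with n hg hl hn2
  have hn1 : (1 : ℕ) ≤ n := by omega
  -- central estimate
  obtain ⟨clo, chi⟩ := central (p i 0) hp00 hp01 n hn1
  rw [← hq] at clo chi
  have hHi : H' i = -(p i 0 * Real.log (p i 0)) - p i 1 * Real.log (p i 1) := hH' i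
  set X : ℝ := binomExp (p i 0) n
      (fun k => (k : ℝ) * Real.log k + ((n - k : ℕ) : ℝ) * Real.log ((n - k : ℕ) : ℝ)) with hX
  have hXlo : (n : ℝ) * H' i - 1 ≤ (n : ℝ) * Real.log n - X := by
    rw [hHi]; nlinarith [chi]
  have hXhi : (n : ℝ) * Real.log n - X ≤ (n : ℝ) * H' i := by
    rw [hHi]; nlinarith [clo]
  have base : (n : ℝ) * H' i / H + pi' (1 - i) * ((H' (1 - i) - H' i) / H) * (n : ℝ) = (n : ℝ) := by
    field_simp
    linear_combination hkey
  have hform : η₂ i n = ((n : ℝ) * H' i / H - 1 / H * ((n : ℝ) * Real.log n - X))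
      - C' * (p i 1 ^ (n - 1) * (n : ℝ)) := by
    rw [hη₂ i n hn2, hη i n hn2, ← hX, hC']
    linear_combination -base
  have he : (n : ℝ) * H' i / H - 1 / H * ((n : ℝ) * Real.log n - X)
      = ((n : ℝ) * H' i - ((n : ℝ) * Real.log n - X)) / H := by ring
  have hD0 : 0 ≤ (n : ℝ) * H' i / H - 1 / H * ((n : ℝ) * Real.log n - X) := by
    rw [he]; exact div_nonneg (by linarith) hHpos.le
  have hD1 : (n : ℝ) * H' i / H - 1 / H * ((n : ℝ) * Real.log n - X) ≤ 1 / H := by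
    rw [he]; gcongr
    · linarith
  have hT : |C' * (p i 1 ^ (n - 1) * (n : ℝ))| ≤ |C'| := by
    rw [abs_mul]
    have hnn : 0 ≤ p i 1 ^ (n - 1) * (n : ℝ) := by positivity
    have h1 : |p i 1 ^ (n - 1) * (n : ℝ)| ≤ 1 := by
      rw [abs_of_nonneg hnn, mul_comm]; exact hg
    calc |C'| * |p i 1 ^ (n - 1) * (n : ℝ)| ≤ |C'| * 1 :=
          mul_le_mul_of_nonneg_left h1 (abs_nonneg _)
      _ = |C'| := mul_one _
  have habs : |η₂ i n| ≤ 1 / H + |C'| := by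
    rw [hform, sub_eq_add_neg]
    refine (abs_add_le _ _).trans ?_
    rw [abs_neg]
    have hDabs : |(n : ℝ) * H' i / H - 1 / H * ((n : ℝ) * Real.log n - X)| ≤ 1 / H := by
      rw [abs_of_nonneg hD0]; exact hD1
    linarith
  have hlogn : (0 : ℝ) ≤ Real.log n := by linarith
  rw [Real.norm_eq_abs, Real.norm_eq_abs, abs_of_nonneg hlogn]
  have hC0 : (0 : ℝ) ≤ 1 / H + |C'| := by positivity
  nlinarith [habs, hl, hC0]
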